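/- Let t ≥ 2 be an integer and let p(x1,…,xt) and q(x1,…,xt) be polynomials with nonnegative integer coefficients taking positive values on positive integer arguments. Then there exist a positive integer k and upper triangular k×k matrices M1, M2 with nonnegative integer entries such that, writing M for the multiplicative submonoid of the k×k matrices generated by M1 and M2, O for the zero matrix, and Mprod(n1,…,nα) = M1^{n1} M2 M1^{n2} M2 ⋯ M1^{nα} M2, for all positive integers n and s the following three conditions are equivalent: (i) there exist positive integers n3,…,nt with p(n,s,n3,…,nt) = q(n,s,n3,…,nt); (ii) there exists a matrix N ∈ M with M2² Mprod(n,s) N = M2³ Mprod(n,s) N ≠ O; (iii) there exist matrices N1, N2 ∈ M with M2² Mprod(n,s) N1 = M2³ Mprod(n,s) N2 ≠ O. -/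

import Mathlib

private lemma key_id (x jj : ℕ) (hx : 1 ≤ x) :
    x * (x-1).choose jj = (jj+1) * ((x-1).choose jj) + (jj+1) * ((x-1).choose (jj+1)) := by
  obtain ⟨m, rfl⟩ : ∃ m, x = m + 1 := ⟨x - 1, by omega⟩
  have h1 : (m+1) * m.choose jj = (m+1).choose (jj+1) * (jj+1) := Nat.add_one_mul_choose_eq m jj
  have h2 : (m+1).choose (jj+1) = m.choose jj + m.choose (jj+1) := Nat.choose_succ_succ m jj
  simp only [Nat.add_sub_cancel]
  rw [h1, h2]; ring

lemma rep_lemma (t : ℕ) (p : MvPolynomial (Fin t) ℕ) :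
    ∃ (K : ℕ) (J : Fin K → Fin t → ℕ) (c : Fin K → ℕ),
      ∀ x : Fin t → ℕ, (∀ i, 1 ≤ x i) →
        MvPolynomial.eval x p = ∑ σ : Fin K, c σ * ∏ i : Fin t, (x i - 1).choose (J σ i) := by
  induction p using MvPolynomial.induction_on with
  | C a =>
      refine ⟨1, fun _ _ => 0, fun _ => a, fun x hx => ?_⟩
      simp
  | add p q hp hq =>
      obtain ⟨K1, J1, c1, h1⟩ := hp
      obtain ⟨K2, J2, c2, h2⟩ := hq
      refine ⟨K1 + K2, Fin.addCases J1 J2, Fin.addCases c1 c2, fun x hx => ?_⟩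
      rw [map_add, h1 x hx, h2 x hx, Fin.sum_univ_add]
      simp
  | mul_X p i hp =>
      obtain ⟨K, J, c, h⟩ := hp
      refine ⟨K + K,
        Fin.addCases J (fun σ j => if j = i then J σ i + 1 else J σ j),
        Fin.addCases (fun σ => c σ * (J σ i + 1)) (fun σ => c σ * (J σ i + 1)),
        fun x hx => ?_⟩
      rw [map_mul, h x hx, MvPolynomial.eval_X, Fin.sum_univ_add]
      simp only [Fin.addCases_left, Fin.addCases_right]
      rw [Finset.sum_mul]
      rw [← Finset.sum_add_distrib]
      refine Finset.sum_congr rfl (fun σ _ => ?_)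
      have hsplit : ∀ (g : Fin t → ℕ), (∏ j : Fin t, g j) = g i * ∏ j ∈ Finset.univ.erase i, g j :=
        fun g => (Finset.mul_prod_erase Finset.univ g (Finset.mem_univ i)).symm
      rw [hsplit (fun j => (x j - 1).choose (J σ j)),
          hsplit (fun j => (x j - 1).choose (if j = i then J σ i + 1 else J σ j))]
      have herase : ∏ j ∈ Finset.univ.erase i, (x j - 1).choose (if j = i then J σ i + 1 else J σ j)
          = ∏ j ∈ Finset.univ.erase i, (x j - 1).choose (J σ j) := by
        refine Finset.prod_congr rfl (fun j hj => ?_)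
        rw [if_neg (Finset.ne_of_mem_erase hj)]
      rw [herase, if_pos rfl]
      have := key_id (x i) (J σ i) (hx i)
      set A := (x i - 1).choose (J σ i)
      set B := (x i - 1).choose (J σ i + 1)
      set P := ∏ j ∈ Finset.univ.erase i, (x j - 1).choose (J σ j)
      calc c σ * (A * P) * x i = c σ * P * (x i * A) := by ring
        _ = c σ * P * ((J σ i + 1) * A + (J σ i + 1) * B) := by rw [this]
        _ = c σ * (J σ i + 1) * (A * P) + c σ * (J σ i + 1) * (B * P) := by ring

namespace S6

inductive St (t K D : ℕ) : Type where
  | h0 | h1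
  | start (b : Bool)
  | node (b : Bool) (σ : Fin K) (i : Fin t) (m : Fin (D+2))
  | last
  deriving DecidableEq, Fintype

section Construction

variable {t K D : ℕ} (J : Bool → Fin K → ℕ → ℕ) (c : Bool → Fin K → ℕ)

variable (t K D) in
abbrev Mat := Matrix (St t K D) (St t K D) ℕ

def e (x : St t K D) : St t K D → ℕ := Pi.single x 1

def M1 : Mat t K D := Matrix.of fun x y =>
  match x, y with
  | .start b, .node b' _ i m => if b' = b ∧ (i:ℕ) = 0 ∧ (m:ℕ) = 1 then 1 else 0
  | .node b σ i m, .node b' σ' i' m' =>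
      if b' = b ∧ σ' = σ ∧ i' = i ∧ (((m':ℕ) = (m:ℕ) ∧ 1 ≤ (m:ℕ)) ∨ (m':ℕ) = (m:ℕ)+1)
      then 1 else 0
  | _, _ => 0

def M2 : Mat t K D := Matrix.of fun x y =>
  match x, y with
  | .h0, .h1 => 1
  | .h1, .start b => if b = true then 1 else 0
  | .start _, .start b' => if b' = false then 1 else 0
  | .node b σ i m, .node b' σ' i' m' =>
      if b' = b ∧ σ' = σ ∧ (m:ℕ) = J b σ i + 1 ∧ (i':ℕ) = (i:ℕ)+1 ∧ (m':ℕ) = 0 then 1 else 0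
  | .node b σ i m, .last => if (m:ℕ) = J b σ i + 1 ∧ (i:ℕ) = t-1 then c b σ else 0
  | .last, .last => 1
  | _, _ => 0


-- index helpers
def fi (i : ℕ) (h : i < t) : Fin t := ⟨i, h⟩
def fm (m : ℕ) (h : m < D + 2) : Fin (D+2) := ⟨m, h⟩

-- M1 row lemmas
lemma row1_h0 : (M1 : Mat t K D) .h0 = 0 := by funext y; cases y <;> rfl
lemma row1_h1 : (M1 : Mat t K D) .h1 = 0 := by funext y; cases y <;> rfl
lemma row1_last : (M1 : Mat t K D) .last = 0 := by funext y; cases y <;> rfl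

lemma row1_start (b : Bool) (h0t : 0 < t) :
    (M1 : Mat t K D) (.start b) = ∑ σ : Fin K, e (.node b σ ⟨0, h0t⟩ ⟨1, by omega⟩) := by
  funext y
  cases y with
  | node b' σ' i' m' =>
      simp only [M1, Matrix.of_apply, e, Finset.sum_apply, Pi.single_apply, St.node.injEq]
      by_cases hb : b' = b
      · subst hb
        by_cases hi : (i' : ℕ) = 0
        · by_cases hm : (m' : ℕ) = 1
          · rw [if_pos ⟨rfl, hi, hm⟩]
            rw [Finset.sum_eq_single σ']
            · simp [Fin.ext_iff, hi.symm, hm.symm]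
            · intro x _ hx; simp [Fin.ext_iff, hx, (Ne.symm hx)]
            · simp
          · rw [if_neg (by tauto)]
            rw [Finset.sum_eq_zero]; intro x _
            simp only [Fin.ext_iff]
            rw [if_neg (by rintro ⟨_, _, _, h⟩; exact hm (by omega))]
        · rw [if_neg (by tauto)]
          rw [Finset.sum_eq_zero]; intro x _
          simp only [Fin.ext_iff]
          rw [if_neg (by rintro ⟨_, _, h, _⟩; exact hi (by omega))]
      · rw [if_neg (by tauto)]
        rw [Finset.sum_eq_zero]; intro x _
        rw [if_neg (by rintro ⟨h, _⟩; exact hb h)]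
  | h0 => simp [M1, e, Finset.sum_apply, Pi.single_apply]
  | h1 => simp [M1, e, Finset.sum_apply, Pi.single_apply]
  | start b' => simp [M1, e, Finset.sum_apply, Pi.single_apply]
  | last => simp [M1, e, Finset.sum_apply, Pi.single_apply]


open Matrix

lemma row1_node_zero (b : Bool) (σ : Fin K) (i : Fin t) (m : Fin (D+2)) (hm : (m:ℕ) = 0) :
    (M1 : Mat t K D) (.node b σ i m) = e (.node b σ i ⟨1, by omega⟩) := by
  funext y
  cases y <;> simp only [M1, Matrix.of_apply, e, Pi.single_apply] <;> try rfl
  case node b' σ' i' m' =>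
    simp only [St.node.injEq, Fin.ext_iff]
    by_cases hb : b' = b
    · subst hb
      simp only [eq_self_iff_true, true_and]
      split_ifs <;> omega
    · have hb2 : ¬(b = b') := fun h => hb h.symm
      simp only [hb, hb2, false_and, if_false]

lemma row1_node_mid (b : Bool) (σ : Fin K) (i : Fin t) (m : Fin (D+2))
    (hm1 : 1 ≤ (m:ℕ)) (hm2 : (m:ℕ) < D+1) :
    (M1 : Mat t K D) (.node b σ i m) = e (.node b σ i m) + e (.node b σ i ⟨(m:ℕ)+1, by omega⟩) := by
  funext y
  cases y <;> simp only [M1, Matrix.of_apply, e, Pi.add_apply, Pi.single_apply] <;> try rfl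
  case node b' σ' i' m' =>
    simp only [St.node.injEq, Fin.ext_iff]
    by_cases hb : b' = b
    · subst hb
      simp only [eq_self_iff_true, true_and]
      split_ifs <;> omega
    · have hb2 : ¬(b = b') := fun h => hb h.symm
      simp only [hb, hb2, false_and, if_false]
      omega

lemma row1_node_top (b : Bool) (σ : Fin K) (i : Fin t) (m : Fin (D+2)) (hm : (m:ℕ) = D+1) :
    (M1 : Mat t K D) (.node b σ i m) = e (.node b σ i m) := by
  funext y
  cases y <;> simp only [M1, Matrix.of_apply, e, Pi.single_apply] <;> try rfl
  case node b' σ' i' m' =>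
    simp only [St.node.injEq, Fin.ext_iff]
    by_cases hb : b' = b
    · subst hb
      simp only [eq_self_iff_true, true_and]
      have := m'.isLt
      split_ifs <;> omega
    · have hb2 : ¬(b = b') := fun h => hb h.symm
      simp only [hb, hb2, false_and, if_false]

-- M2 row lemmas
lemma row2_h0 : (M2 J c : Mat t K D) .h0 = e .h1 := by
  funext y; cases y <;> simp [M2, e, Pi.single_apply]

lemma row2_h1 : (M2 J c : Mat t K D) .h1 = e (.start true) := by
  funext y
  cases y <;> simp [M2, e, Pi.single_apply]

lemma row2_start (b : Bool) : (M2 J c : Mat t K D) (.start b) = e (.start false) := by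
  funext y
  cases y <;> simp [M2, e, Pi.single_apply]

lemma row2_last : (M2 J c : Mat t K D) .last = e .last := by
  funext y; cases y <;> simp [M2, e, Pi.single_apply]

lemma row2_node_mid (b : Bool) (σ : Fin K) (i : Fin t) (m : Fin (D+2))
    (hm : (m:ℕ) ≠ J b σ (i:ℕ) + 1) :
    (M2 J c : Mat t K D) (.node b σ i m) = 0 := by
  funext y
  cases y <;> simp only [M2, Matrix.of_apply, Pi.zero_apply] <;> try rfl
  · rw [if_neg (by tauto)]
  · rw [if_neg (by tauto)]

lemma row2_node_step (b : Bool) (σ : Fin K) (i : Fin t) (m : Fin (D+2))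
    (hm : (m:ℕ) = J b σ (i:ℕ) + 1) (hi : (i:ℕ)+1 < t) :
    (M2 J c : Mat t K D) (.node b σ i m) = e (.node b σ ⟨(i:ℕ)+1, hi⟩ ⟨0, by omega⟩) := by
  funext y
  cases y <;> simp only [M2, Matrix.of_apply, e, Pi.single_apply] <;> try rfl
  case node b' σ' i' m' =>
    simp only [St.node.injEq, Fin.ext_iff]
    by_cases hb : b' = b
    · subst hb
      simp only [eq_self_iff_true, true_and]
      split_ifs <;> omega
    · have hb2 : ¬(b = b') := fun h => hb h.symm
      simp only [hb, hb2, false_and, if_false]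
  case last =>
    rw [if_neg (by omega), if_neg (fun h => by cases h)]

lemma row2_node_last (b : Bool) (σ : Fin K) (i : Fin t) (m : Fin (D+2))
    (hm : (m:ℕ) = J b σ (i:ℕ) + 1) (hi : (i:ℕ) = t - 1) :
    (M2 J c : Mat t K D) (.node b σ i m) = c b σ • e .last := by
  have htt : 0 < t := i.pos
  funext y
  cases y <;> simp only [M2, Matrix.of_apply, e, Pi.smul_apply, Pi.single_apply, smul_eq_mul,
    mul_zero, mul_one] <;> try rfl
  case node b' σ' i' m' =>
    have := i'.isLt
    rw [if_neg (by push_neg; intro _ _ _ h; omega), if_neg (fun h => by cases h), mul_zero]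
  case last =>
    rw [if_pos ⟨hm, hi⟩]; simp

-- vecMul helpers
lemma single_vecMul' (x : St t K D) (a : ℕ) (M : Mat t K D) :
    Pi.single x a ᵥ* M = a • (M x) := by
  funext j
  simp [Matrix.vecMul, dotProduct, Pi.single_apply, Finset.sum_ite_eq]

lemma e_vecMul (x : St t K D) (M : Mat t K D) : e x ᵥ* M = M x := by
  rw [e, single_vecMul', one_smul]

lemma smul_vecMul' (a : ℕ) (v : St t K D → ℕ) (M : Mat t K D) :
    (a • v) ᵥ* M = a • (v ᵥ* M) := by
  funext j
  simp [Matrix.vecMul, dotProduct, Finset.mul_sum, mul_assoc]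

lemma sum_vecMul' {ι : Type*} (s : Finset ι) (f : ι → St t K D → ℕ) (M : Mat t K D) :
    (∑ σ ∈ s, f σ) ᵥ* M = ∑ σ ∈ s, (f σ) ᵥ* M := by
  funext j
  simp only [Matrix.vecMul, dotProduct, Finset.sum_apply, Finset.sum_mul]
  rw [Finset.sum_comm]

lemma zero_vecMul' (M : Mat t K D) : (0 : St t K D → ℕ) ᵥ* M = 0 := by
  funext j; simp [Matrix.vecMul, dotProduct]

lemma add_vecMul' (v w : St t K D → ℕ) (M : Mat t K D) :
    (v + w) ᵥ* M = v ᵥ* M + w ᵥ* M := by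
  funext j
  simp [Matrix.vecMul, dotProduct, add_mul, Finset.sum_add_distrib]


-- clamped node helper
def nd (b : Bool) (σ : Fin K) (i : Fin t) (v : ℕ) : St t K D :=
  .node b σ i ⟨min v (D+1), Nat.lt_succ_of_le (Nat.min_le_right _ _)⟩

lemma nd_val (b : Bool) (σ : Fin K) (i : Fin t) (v : ℕ) (h : v ≤ D+1) :
    nd b σ i v = .node b σ i ⟨v, Nat.lt_succ_of_le h⟩ := by
  simp [nd, Nat.min_eq_left h]

-- chain evolution under M1
lemma chain_step (b : Bool) (σ : Fin K) (i : Fin t) (y : ℕ) :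
    e (nd b σ i 1) ᵥ* ((M1 : Mat t K D) ^ y)
      = ∑ m ∈ Finset.range (D+1), Nat.choose y m • e (nd b σ i (m+1)) := by
  induction y with
  | zero =>
      rw [pow_zero, Matrix.vecMul_one]
      rw [Finset.sum_eq_single 0]
      · simp
      · intro m _ hm; rw [Nat.choose_eq_zero_of_lt (by omega), zero_smul]
      · simp
  | succ y ih =>
      rw [pow_succ, ← Matrix.vecMul_vecMul, ih, sum_vecMul']
      have hrow : ∀ m ∈ Finset.range (D+1),
          (Nat.choose y m • e (nd b σ i (m+1))) ᵥ* (M1 : Mat t K D)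
            = Nat.choose y m • (e (nd b σ i (m+1)) + (if m < D then e (nd b σ i (m+2)) else 0)) := by
        intro m hm
        rw [Finset.mem_range] at hm
        rw [smul_vecMul', e_vecMul]
        by_cases hmD : m < D
        · rw [nd_val b σ i (m+1) (by omega),
            row1_node_mid b σ i (⟨m+1, by omega⟩ : Fin (D+2)) (by simp) (by simp only [Fin.val_mk]; omega)]
          rw [if_pos hmD, nd_val b σ i (m+2) (by omega)]
        · have hmD' : m = D := by omega
          rw [hmD', nd_val b σ i (D+1) (by omega),
            row1_node_top b σ i (⟨D+1, by omega⟩ : Fin (D+2)) (by simp)]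
          rw [if_neg (by omega), add_zero]
      rw [Finset.sum_congr rfl hrow]
      have expand : ∀ m, Nat.choose y m • (e (nd b σ i (m+1)) + (if m < D then e (nd b σ i (m+2)) else 0))
          = (Nat.choose y m • e (nd b σ i (m+1)) + (if m < D then Nat.choose y m • e (nd b σ i (m+2)) else 0) : St t K D → ℕ) := by
        intro m; split_ifs <;> simp [smul_add]
      rw [Finset.sum_congr rfl (fun m _ => expand m), Finset.sum_add_distrib]
      have h2 : (∑ m ∈ Finset.range (D+1), (if m < D then Nat.choose y m • e (nd b σ i (m+2) : St t K D) else 0))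
          = ∑ m ∈ Finset.range (D+1), (if m = 0 then 0 else Nat.choose y (m-1) • e (nd b σ i (m+1) : St t K D)) := by
        rw [Finset.sum_range_succ, if_neg (by omega), add_zero,
          Finset.sum_range_succ' (fun m => if m = 0 then (0 : St t K D → ℕ) else Nat.choose y (m-1) • e (nd b σ i (m+1)))]
        simp only [if_pos rfl, add_zero, Nat.add_sub_cancel]
        refine Finset.sum_congr rfl (fun m hm => ?_)
        rw [Finset.mem_range] at hm
        rw [if_pos hm, if_neg (by omega)]
      rw [h2, ← Finset.sum_add_distrib]
      refine Finset.sum_congr rfl (fun m hm => ?_)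
      by_cases hm0 : m = 0
      · subst hm0; simp
      · obtain ⟨m', rfl⟩ : ∃ m', m = m' + 1 := ⟨m - 1, by omega⟩
        rw [if_neg hm0, Nat.add_sub_cancel, Nat.choose_succ_succ y m', ← add_smul, add_comm (Nat.choose y m')]

-- entry behaviour
lemma entry_M1 (b : Bool) (σ : Fin K) (i : Fin t) :
    e (.node b σ i ⟨0, by omega⟩ : St t K D) ᵥ* M1 = e (nd b σ i 1) := by
  rw [e_vecMul, row1_node_zero b σ i _ rfl, nd_val b σ i 1 (by omega)]

lemma entry_M1_pow (b : Bool) (σ : Fin K) (i : Fin t) (y : ℕ) (hy : 1 ≤ y) :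
    e (.node b σ i ⟨0, by omega⟩ : St t K D) ᵥ* (M1 ^ y)
      = ∑ m ∈ Finset.range (D+1), Nat.choose (y-1) m • e (nd b σ i (m+1)) := by
  obtain ⟨y', rfl⟩ : ∃ y', y = y' + 1 := ⟨y - 1, by omega⟩
  rw [show y' + 1 = 1 + y' by omega, pow_add, pow_one, ← Matrix.vecMul_vecMul, entry_M1,
    chain_step, show 1 + y' - 1 = y' by omega]

lemma entry_M2 (b : Bool) (σ : Fin K) (i : Fin t) :
    e (.node b σ i ⟨0, by omega⟩ : St t K D) ᵥ* (M2 J c) = 0 := by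
  rw [e_vecMul, row2_node_mid J c b σ i _ (by simp)]


def phi (L : List ℕ) (r : ℕ) : Mat t K D :=
  (L.map (fun a => (M1 : Mat t K D) ^ a * M2 J c)).prod * (M1 : Mat t K D) ^ r

lemma phi_nil (r : ℕ) : phi J c ([] : List ℕ) r = (M1 : Mat t K D) ^ r := by
  simp [phi]

lemma phi_cons (a : ℕ) (L : List ℕ) (r : ℕ) :
    phi J c (a :: L) r = ((M1 : Mat t K D) ^ a * M2 J c) * phi J c L r := by
  simp [phi, List.prod_cons, mul_assoc]

-- separator lemmas
lemma sep_step (b : Bool) (σ : Fin K) (i : Fin t) (hJD : J b σ (i:ℕ) ≤ D)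
    (hi : (i:ℕ)+1 < t) (w : ℕ → ℕ) :
    (∑ m ∈ Finset.range (D+1), w m • e (nd b σ i (m+1) : St t K D)) ᵥ* (M2 J c)
      = w (J b σ (i:ℕ)) • e (.node b σ ⟨(i:ℕ)+1, hi⟩ ⟨0, by omega⟩) := by
  rw [sum_vecMul']
  rw [Finset.sum_eq_single (J b σ (i:ℕ))]
  · rw [smul_vecMul', e_vecMul, nd_val b σ i (J b σ (i:ℕ) + 1) (by omega),
      row2_node_step J c b σ i _ (by simp) hi]
  · intro m hm hne
    rw [smul_vecMul', e_vecMul, nd_val b σ i (m+1) (by rw [Finset.mem_range] at hm; omega),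
      row2_node_mid J c b σ i _ (by simp; omega), smul_zero]
  · intro h
    exact absurd (Finset.mem_range.mpr (by omega)) h

lemma sep_last (b : Bool) (σ : Fin K) (i : Fin t) (hJD : J b σ (i:ℕ) ≤ D)
    (hi : (i:ℕ) = t - 1) (w : ℕ → ℕ) :
    (∑ m ∈ Finset.range (D+1), w m • e (nd b σ i (m+1) : St t K D)) ᵥ* (M2 J c)
      = (w (J b σ (i:ℕ)) * c b σ) • e .last := by
  rw [sum_vecMul']
  rw [Finset.sum_eq_single (J b σ (i:ℕ))]
  · rw [smul_vecMul', e_vecMul, nd_val b σ i (J b σ (i:ℕ) + 1) (by omega),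
      row2_node_last J c b σ i _ (by simp) hi, smul_smul]
  · intro m hm hne
    rw [smul_vecMul', e_vecMul, nd_val b σ i (m+1) (by rw [Finset.mem_range] at hm; omega),
      row2_node_mid J c b σ i _ (by simp; omega), smul_zero]
  · intro h
    exact absurd (Finset.mem_range.mpr (by omega)) h

-- last-state behaviour
lemma vecMul_M1_last (v : St t K D → ℕ) : (v ᵥ* (M1 : Mat t K D)) .last = 0 := by
  simp only [Matrix.vecMul, dotProduct]
  refine Finset.sum_eq_zero (fun x _ => ?_)
  cases x <;> simp [M1]

lemma last_M1_pow (y : ℕ) (hy : 1 ≤ y) :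
    e (.last : St t K D) ᵥ* (M1 ^ y) = 0 := by
  obtain ⟨y', rfl⟩ : ∃ y', y = y' + 1 := ⟨y - 1, by omega⟩
  rw [show y' + 1 = 1 + y' by omega, pow_add, pow_one, ← Matrix.vecMul_vecMul, e_vecMul,
    row1_last, zero_vecMul']

lemma last_phi (L : List ℕ) : ∀ (r : ℕ),
    e (.last : St t K D) ᵥ* phi J c L r
      = if (∀ a ∈ L, a = 0) ∧ r = 0 then e .last else 0 := by
  induction L with
  | nil =>
      intro r
      rw [phi_nil]
      by_cases hr : r = 0
      · subst hr; rw [pow_zero, Matrix.vecMul_one, if_pos ⟨by simp, rfl⟩]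
      · rw [last_M1_pow r (by omega), if_neg (by tauto)]
  | cons a L ih =>
      intro r
      rw [phi_cons, ← Matrix.vecMul_vecMul, ← Matrix.vecMul_vecMul]
      by_cases ha : a = 0
      · subst ha
        rw [pow_zero, Matrix.vecMul_one, e_vecMul, row2_last, ih r,
          if_congr (by simp : ((∀ x ∈ (0:ℕ)::L, x = 0) ∧ r = 0) ↔ ((∀ x ∈ L, x = 0) ∧ r = 0))
            rfl rfl]
      · rw [last_M1_pow a (by omega), zero_vecMul', zero_vecMul',
          if_neg (by rintro ⟨hall, -⟩; exact ha (hall a List.mem_cons_self))]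

-- goodness of block decompositions
def good (L : List ℕ) (r k : ℕ) : Prop :=
  r = 0 ∧ (∀ j, j < k → 1 ≤ L.getD j 0) ∧ (∀ j, k ≤ j → L.getD j 0 = 0)

lemma good_cons {a : ℕ} (ha : 1 ≤ a) (L : List ℕ) (r k : ℕ) :
    good (a :: L) r (k+1) ↔ good L r k := by
  constructor
  · rintro ⟨hr, h1, h2⟩
    exact ⟨hr, fun j hj => by simpa using h1 (j+1) (by omega),
      fun j hj => by simpa using h2 (j+1) (by omega)⟩
  · rintro ⟨hr, h1, h2⟩
    refine ⟨hr, fun j hj => ?_, fun j hj => ?_⟩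
    · cases j with
      | zero => simpa using ha
      | succ j' => simpa using h1 j' (by omega)
    · cases j with
      | zero => omega
      | succ j' => simpa using h2 j' (by omega)

lemma good_zero_iff (L : List ℕ) (r : ℕ) :
    good L r 0 ↔ ((∀ a ∈ L, a = 0) ∧ r = 0) := by
  constructor
  · rintro ⟨hr, -, h2⟩
    refine ⟨fun x hx => ?_, hr⟩
    obtain ⟨j, hj, rfl⟩ := List.mem_iff_getElem.mp hx
    have := h2 j (by omega)
    rwa [List.getD_eq_getElem L 0 hj] at this
  · rintro ⟨hall, hr⟩
    refine ⟨hr, fun j hj => by omega, fun j _ => ?_⟩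
    by_cases hjl : j < L.length
    · rw [List.getD_eq_getElem L 0 hjl]
      exact hall _ (List.getElem_mem hjl)
    · rw [List.getD_eq_default L 0 (by omega)]

lemma not_good_short (L : List ℕ) (r k : ℕ) (hk : 1 ≤ k) (hL : L = []) : ¬ good L r k := by
  rintro ⟨-, h1, -⟩
  have := h1 0 (by omega)
  simp [hL] at this

-- weight products
def wtv (b : Bool) (σ : Fin K) (i : ℕ) (L : List ℕ) (k : ℕ) : ℕ :=
  ∏ j ∈ Finset.range k, Nat.choose (L.getD j 0 - 1) (J b σ (i+j))

lemma wtv_zero (b : Bool) (σ : Fin K) (i : ℕ) (L : List ℕ) : wtv J b σ i L 0 = 1 := by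
  simp [wtv]

lemma wtv_cons (b : Bool) (σ : Fin K) (i : ℕ) (a : ℕ) (L : List ℕ) (k : ℕ) :
    wtv J b σ i (a :: L) (k+1) = Nat.choose (a-1) (J b σ i) * wtv J b σ (i+1) L k := by
  rw [wtv, Finset.prod_range_succ']
  have h0 : (((a::L).getD 0 0) - 1).choose (J b σ (i+0)) = Nat.choose (a-1) (J b σ i) := by simp
  have h1 : (∏ j ∈ Finset.range k, ((((a::L).getD (j+1) 0) - 1).choose (J b σ (i+(j+1)))))
      = wtv J b σ (i+1) L k := by
    rw [wtv]
    refine Finset.prod_congr rfl (fun j hj => ?_)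
    rw [List.getD_cons_succ]
    congr 2
    omega
  rw [h0, h1, mul_comm]


lemma sum_node_last (b : Bool) (ii : Fin t) (mm : Fin (D+2)) (w : Fin K → ℕ) :
    (∑ σ : Fin K, w σ • e (.node b σ ii mm : St t K D)) .last = 0 := by
  simp [e, Finset.sum_apply, Pi.single_apply]

lemma main_aux (hJD : ∀ b' σ' i', J b' σ' i' ≤ D) (L : List ℕ) :
    ∀ (r : ℕ) (b : Bool) (i : ℕ) (hi : i < t) (w : Fin K → ℕ),
    (good L r (t - i) →
      (∑ σ : Fin K, w σ • e (.node b σ ⟨i, hi⟩ ⟨0, by omega⟩ : St t K D)) ᵥ* phi J c L r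
        = (∑ σ : Fin K, w σ * wtv J b σ i L (t - i) * c b σ) • e .last)
  ∧ (¬ good L r (t - i) →
      ((∑ σ : Fin K, w σ • e (.node b σ ⟨i, hi⟩ ⟨0, by omega⟩ : St t K D)) ᵥ* phi J c L r) .last
        = 0) := by
  induction L with
  | nil =>
      intro r b i hi w
      constructor
      · intro hg; exact absurd hg (not_good_short _ _ _ (by omega) rfl)
      · intro _
        rw [phi_nil]
        rcases Nat.eq_zero_or_pos r with hr | hr
        · subst hr
          rw [pow_zero, Matrix.vecMul_one]
          exact sum_node_last b _ _ w
        · obtain ⟨r', rfl⟩ : ∃ r', r = r' + 1 := ⟨r-1, by omega⟩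
          rw [pow_succ, ← Matrix.vecMul_vecMul]
          exact vecMul_M1_last _
  | cons a L ih =>
      intro r b i hi w
      by_cases ha : 1 ≤ a
      case neg =>
        have ha0 : a = 0 := by omega
        subst ha0
        have hzero : (∑ σ : Fin K, w σ • e (.node b σ ⟨i, hi⟩ ⟨0, by omega⟩ : St t K D))
            ᵥ* phi J c (0 :: L) r = 0 := by
          rw [phi_cons, pow_zero, one_mul, ← Matrix.vecMul_vecMul, sum_vecMul']
          rw [Finset.sum_eq_zero, zero_vecMul']
          intro σ _
          rw [smul_vecMul', e_vecMul, row2_node_mid J c b σ _ _ (by simp), smul_zero]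
        constructor
        · intro hg
          exfalso
          obtain ⟨-, h1, -⟩ := hg
          have := h1 0 (by omega)
          simp at this
        · intro _; rw [hzero]; simp
      case pos =>
        have hpre : (∑ σ : Fin K, w σ • e (.node b σ ⟨i, hi⟩ ⟨0, by omega⟩ : St t K D)) ᵥ* ((M1 : Mat t K D) ^ a)
            = ∑ σ : Fin K, ∑ m ∈ Finset.range (D+1),
                (w σ * Nat.choose (a-1) m) • e (nd b σ ⟨i, hi⟩ (m+1) : St t K D) := by
          rw [sum_vecMul']
          refine Finset.sum_congr rfl (fun σ _ => ?_)
          rw [smul_vecMul', entry_M1_pow b σ ⟨i,hi⟩ a ha, Finset.smul_sum]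
          refine Finset.sum_congr rfl (fun m _ => ?_)
          rw [smul_smul]
        by_cases hstep : i + 1 < t
        · have hV : (∑ σ : Fin K, w σ • e (.node b σ ⟨i, hi⟩ ⟨0, by omega⟩ : St t K D)) ᵥ* phi J c (a::L) r
              = (∑ σ : Fin K, (w σ * Nat.choose (a-1) (J b σ i))
                  • e (.node b σ ⟨i+1, hstep⟩ ⟨0, by omega⟩ : St t K D)) ᵥ* phi J c L r := by
            rw [phi_cons, ← Matrix.vecMul_vecMul, ← Matrix.vecMul_vecMul, hpre, sum_vecMul',
              Finset.sum_congr rfl (fun σ _ => sep_step J c b σ ⟨i,hi⟩ (hJD b σ i)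
                (by simpa using hstep) (fun m => w σ * Nat.choose (a-1) m))]
          have hgood : good (a::L) r (t - i) ↔ good L r (t - (i+1)) := by
            have h1 : t - i = (t - (i+1)) + 1 := by omega
            rw [h1]; exact good_cons ha L r _
          obtain ⟨ih1, ih2⟩ := ih r b (i+1) hstep (fun σ => w σ * Nat.choose (a-1) (J b σ i))
          constructor
          · intro hg
            rw [hV, ih1 (hgood.mp hg)]
            congr 1
            refine Finset.sum_congr rfl (fun σ _ => ?_)
            rw [show t - i = (t - (i+1)) + 1 by omega, wtv_cons]
            ring
          · intro hg
            rw [hV]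
            exact ih2 (fun h => hg (hgood.mpr h))
        · have hlast : i = t - 1 := by omega
          have hV : (∑ σ : Fin K, w σ • e (.node b σ ⟨i, hi⟩ ⟨0, by omega⟩ : St t K D)) ᵥ* phi J c (a::L) r
              = (∑ σ : Fin K, (w σ * Nat.choose (a-1) (J b σ i) * c b σ))
                  • (e (.last : St t K D) ᵥ* phi J c L r) := by
            rw [phi_cons, ← Matrix.vecMul_vecMul, ← Matrix.vecMul_vecMul, hpre, sum_vecMul']
            have hσ : ∀ σ : Fin K,
                (∑ m ∈ Finset.range (D+1), (w σ * Nat.choose (a-1) m)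
                    • e (nd b σ ⟨i,hi⟩ (m+1) : St t K D)) ᵥ* M2 J c
                  = (w σ * Nat.choose (a-1) (J b σ i) * c b σ) • e .last :=
              fun σ => sep_last J c b σ ⟨i,hi⟩ (hJD b σ i) (by simpa using hlast)
                (fun m => w σ * Nat.choose (a-1) m)
            rw [Finset.sum_congr rfl (fun σ _ => hσ σ), ← Finset.sum_smul, smul_vecMul']
          rw [hV, last_phi]
          constructor
          · intro hg
            have hcond : (∀ x ∈ L, x = 0) ∧ r = 0 := by
              refine (good_zero_iff L r).mp ?_
              have h1 : t - i = 1 := by omega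
              rw [h1] at hg
              exact (good_cons ha L r 0).mp hg
            rw [if_pos hcond]
            congr 1
            refine Finset.sum_congr rfl (fun σ _ => ?_)
            rw [show t - i = 0 + 1 by omega, wtv_cons, wtv_zero]
            ring
          · intro hg
            rw [if_neg, smul_zero]
            · simp
            · intro hcond
              apply hg
              have h0 : good L r 0 := (good_zero_iff L r).mpr hcond
              have h1 : t - i = 1 := by omega
              rw [h1]
              exact (good_cons ha L r 0).mpr h0


lemma start_run (hJD : ∀ b' σ' i', J b' σ' i' ≤ D) (htt : 2 ≤ t) (b : Bool)
    (x1 : ℕ) (hx1 : 1 ≤ x1) (L : List ℕ) (r : ℕ) :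
    e (.start b : St t K D) ᵥ* phi J c (x1 :: L) r
      = (∑ σ : Fin K, Nat.choose (x1-1) (J b σ 0)
          • e (.node b σ ⟨1, by omega⟩ ⟨0, by omega⟩ : St t K D)) ᵥ* phi J c L r := by
  rw [phi_cons, ← Matrix.vecMul_vecMul, ← Matrix.vecMul_vecMul]
  obtain ⟨y, rfl⟩ : ∃ y, x1 = 1 + y := ⟨x1 - 1, by omega⟩
  rw [pow_add, pow_one, ← Matrix.vecMul_vecMul, e_vecMul, row1_start b (by omega), sum_vecMul']
  have hc : ∀ σ : Fin K,
      e (.node b σ (⟨0, by omega⟩ : Fin t) (⟨1, by omega⟩ : Fin (D+2)) : St t K D) ᵥ* ((M1 : Mat t K D)^y)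
        = ∑ m ∈ Finset.range (D+1), Nat.choose y m • e (nd b σ ⟨0, by omega⟩ (m+1) : St t K D) := by
    intro σ
    have h := chain_step (D := D) b σ (⟨0, by omega⟩ : Fin t) y
    rwa [nd_val b σ _ 1 (by omega)] at h
  rw [Finset.sum_congr rfl (fun σ _ => hc σ), sum_vecMul',
    Finset.sum_congr rfl (fun σ _ => sep_step J c b σ (⟨0, by omega⟩ : Fin t) (hJD b σ 0)
      (by simpa using (by omega : 0 + 1 < t)) (fun m => Nat.choose y m))]
  rw [show 1 + y - 1 = y by omega]

def tval (tt : ℕ) (b : Bool) (x : ℕ → ℕ) : ℕ :=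
  ∑ σ : Fin K, c b σ * ∏ j ∈ Finset.range tt, Nat.choose (x j - 1) (J b σ j)

lemma top_run (hJD : ∀ b' σ' i', J b' σ' i' ≤ D) (htt : 2 ≤ t)
    (x1 : ℕ) (hx1 : 1 ≤ x1) (L : List ℕ) (r : ℕ) (b : Bool) :
    (good (x1::L) r t →
      e (.start b : St t K D) ᵥ* phi J c (x1::L) r
        = tval J c t b (fun j => (x1::L).getD j 0) • e .last)
  ∧ (¬ good (x1::L) r t →
      (e (.start b : St t K D) ᵥ* phi J c (x1::L) r) .last = 0) := by
  obtain ⟨m1, m2⟩ := main_aux (t := t) (D := D) J c hJD L r b 1 (by omega) (fun σ => Nat.choose (x1-1) (J b σ 0))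
  have hgood : good (x1::L) r t ↔ good L r (t-1) := by
    have h := good_cons hx1 L r (t-1)
    rwa [show (t-1)+1 = t by omega] at h
  have ht1 : t - 1 = t - 1 := rfl
  constructor
  · intro hg
    rw [start_run J c hJD htt b x1 hx1 L r, m1 (hgood.mp hg)]
    congr 1
    rw [tval]
    refine Finset.sum_congr rfl (fun σ _ => ?_)
    have hprod : (∏ j ∈ Finset.range t, Nat.choose ((x1::L).getD j 0 - 1) (J b σ j))
        = Nat.choose (x1-1) (J b σ 0) * wtv J b σ 1 L (t-1) := by
      have h2 := wtv_cons J b σ 0 x1 L (t-1)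
      rw [show (t-1)+1 = t by omega] at h2
      rw [← h2, wtv]
      refine Finset.prod_congr rfl (fun j hj => ?_)
      simp
    rw [hprod]; ring
  · intro hg
    rw [start_run J c hJD htt b x1 hx1 L r]
    exact m2 (fun h => hg (hgood.mpr h))

-- every element of the monoid is a phi
lemma list_prod_phi : ∀ (l : List (Mat t K D)),
    (∀ y ∈ l, y = M1 ∨ y = M2 J c) → ∃ L r, l.prod = phi J c L r := by
  intro l
  induction l with
  | nil => exact fun _ => ⟨[], 0, by simp [phi]⟩
  | cons g l ih =>
      intro hl
      obtain ⟨L, r, hLr⟩ := ih (fun y hy => hl y (List.mem_cons_of_mem g hy))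
      rw [List.prod_cons, hLr]
      rcases hl g List.mem_cons_self with hg | hg
      · subst hg
        cases L with
        | nil => exact ⟨[], r+1, by rw [phi_nil, phi_nil, pow_succ']⟩
        | cons aa L' =>
            refine ⟨(aa+1)::L', r, ?_⟩
            rw [phi_cons, phi_cons, pow_succ']
            simp [mul_assoc]
      · subst hg
        exact ⟨0::L, r, by rw [phi_cons, pow_zero, one_mul]⟩

lemma closure_mem_phi (N : Mat t K D)
    (hN : N ∈ Submonoid.closure {(M1 : Mat t K D), M2 J c}) :
    ∃ L r, N = phi J c L r := by
  obtain ⟨l, hl, rfl⟩ := Submonoid.exists_list_of_mem_closure hN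
  refine list_prod_phi J c l (fun y hy => ?_)
  have := hl y hy
  simpa [Set.mem_insert_iff] using this

-- cleanness
def cleanb (b : Bool) (v : St t K D → ℕ) : Prop :=
  v .h0 = 0 ∧ v .h1 = 0 ∧ v (.start true) = 0 ∧ v (.start false) = 0 ∧
  ∀ b' σ i m, b' ≠ b → v (.node b' σ i m) = 0

lemma cleanb_vecMul (b : Bool) (v : St t K D → ℕ) (hv : cleanb b v)
    (X : Mat t K D) (hX : X = M1 ∨ X = M2 J c) : cleanb b (v ᵥ* X) := by
  obtain ⟨h0, h1, hT, hF, hn⟩ := hv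
  have comp : ∀ y : St t K D, (v ᵥ* X) y = ∑ z : St t K D, v z * X z y := by
    intro y; simp [Matrix.vecMul, dotProduct]
  rcases hX with rfl | rfl
  · refine ⟨?_, ?_, ?_, ?_, ?_⟩
    · rw [comp]; exact Finset.sum_eq_zero (fun z _ => by cases z <;> simp [M1])
    · rw [comp]; exact Finset.sum_eq_zero (fun z _ => by cases z <;> simp [M1])
    · rw [comp]; exact Finset.sum_eq_zero (fun z _ => by cases z <;> simp [M1])
    · rw [comp]; exact Finset.sum_eq_zero (fun z _ => by cases z <;> simp [M1])
    · intro b' σ i m hb'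
      rw [comp]
      refine Finset.sum_eq_zero (fun z _ => ?_)
      cases z with
      | h0 => rw [h0, zero_mul]
      | h1 => rw [h1, zero_mul]
      | start bz => cases bz
                    · rw [hF, zero_mul]
                    · rw [hT, zero_mul]
      | last => simp [M1]
      | node bz σz iz mz =>
          by_cases hbz : bz = b
          · have : ¬ (b' = bz) := by rw [hbz]; exact hb'
            simp only [M1, Matrix.of_apply]
            rw [if_neg (by tauto), mul_zero]
          · rw [hn bz σz iz mz hbz, zero_mul]
  · refine ⟨?_, ?_, ?_, ?_, ?_⟩
    · rw [comp]; exact Finset.sum_eq_zero (fun z _ => by cases z <;> simp [M2])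
    · rw [comp]
      refine Finset.sum_eq_zero (fun z _ => ?_)
      cases z <;> simp [M2]
      exact h0
    · rw [comp]
      refine Finset.sum_eq_zero (fun z _ => ?_)
      cases z <;> simp [M2]
      exact h1
    · rw [comp]
      refine Finset.sum_eq_zero (fun z _ => ?_)
      cases z with
      | start bz => cases bz
                    · rw [hF, zero_mul]
                    · rw [hT, zero_mul]
      | _ => simp [M2]
    · intro b' σ i m hb'
      rw [comp]
      refine Finset.sum_eq_zero (fun z _ => ?_)
      cases z with
      | h0 => rw [h0, zero_mul]
      | h1 => rw [h1, zero_mul]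
      | start bz => cases bz
                    · rw [hF, zero_mul]
                    · rw [hT, zero_mul]
      | last => simp [M2]
      | node bz σz iz mz =>
          by_cases hbz : bz = b
          · have : ¬ (b' = bz) := by rw [hbz]; exact hb'
            simp only [M2, Matrix.of_apply]
            rw [if_neg (by tauto), mul_zero]
          · rw [hn bz σz iz mz hbz, zero_mul]

lemma cleanb_closure (b : Bool) :
    ∀ X ∈ Submonoid.closure {(M1 : Mat t K D), M2 J c},
      ∀ v : St t K D → ℕ, cleanb b v → cleanb b (v ᵥ* X) := by
  intro X hX
  induction hX using Submonoid.closure_induction with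
  | mem Y hY =>
      intro v hv
      refine cleanb_vecMul J c b v hv Y ?_
      simpa [Set.mem_insert_iff] using hY
  | one => intro v hv; rwa [Matrix.vecMul_one]
  | mul Y Z hY hZ ihY ihZ =>
      intro v hv
      rw [← Matrix.vecMul_vecMul]
      exact ihZ _ (ihY _ hv)


lemma row_mul (A Y : Mat t K D) (z : St t K D) : (A * Y) z = A z ᵥ* Y := by
  funext y
  simp [Matrix.mul_apply, Matrix.vecMul, dotProduct]

lemma sq_h0 : ((M2 J c)^2 : Mat t K D) .h0 = e (.start true) := by
  rw [pow_two, row_mul, row2_h0, e_vecMul, row2_h1]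

lemma cube_h0 : ((M2 J c)^3 : Mat t K D) .h0 = e (.start false) := by
  rw [pow_succ, row_mul, sq_h0, e_vecMul, row2_start]

lemma sq_h1 : ((M2 J c)^2 : Mat t K D) .h1 = e (.start false) := by
  rw [pow_two, row_mul, row2_h1, e_vecMul, row2_start]

lemma sq_start (b : Bool) : ((M2 J c)^2 : Mat t K D) (.start b) = e (.start false) := by
  rw [pow_two, row_mul, row2_start, e_vecMul, row2_start]

lemma sq_last : ((M2 J c)^2 : Mat t K D) .last = e .last := by
  rw [pow_two, row_mul, row2_last, e_vecMul, row2_last]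

lemma sq_node (b : Bool) (σ : Fin K) (i : Fin t) (m : Fin (D+2)) :
    ((M2 J c)^2 : Mat t K D) (.node b σ i m)
      = if (m:ℕ) = J b σ (i:ℕ) + 1 ∧ (i:ℕ) = t - 1 then c b σ • e .last else 0 := by
  rw [pow_two, row_mul]
  by_cases hm : (m:ℕ) = J b σ (i:ℕ) + 1
  · by_cases hiT : (i:ℕ) + 1 < t
    · rw [row2_node_step J c b σ i m hm hiT, e_vecMul, row2_node_mid J c _ _ _ _ (by simp),
        if_neg (by omega)]
    · have hlast : (i:ℕ) = t - 1 := by have := i.isLt; omega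
      rw [row2_node_last J c b σ i m hm hlast, smul_vecMul', e_vecMul, row2_last,
        if_pos ⟨hm, hlast⟩]
  · rw [row2_node_mid J c b σ i m hm, zero_vecMul', if_neg (by tauto)]

lemma row23 (z : St t K D) (hz : z ≠ .h0) : ((M2 J c)^2) z = ((M2 J c)^3) z := by
  have h3 : ((M2 J c)^3 : Mat t K D) z = (((M2 J c)^2) z) ᵥ* M2 J c := by
    rw [pow_succ, row_mul]
  rw [h3]
  cases z with
  | h0 => exact absurd rfl hz
  | h1 => rw [sq_h1, e_vecMul, row2_start]
  | start b => rw [sq_start, e_vecMul, row2_start]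
  | last => rw [sq_last, e_vecMul, row2_last]
  | node b σ i m =>
      rw [sq_node]
      split_ifs with h
      · rw [smul_vecMul', e_vecMul, row2_last]
      · rw [zero_vecMul']

lemma M2sq_zero (X : Mat t K D)
    (hT : e (.start true : St t K D) ᵥ* X = 0)
    (hF : e (.start false : St t K D) ᵥ* X = 0)
    (hL : e (.last : St t K D) ᵥ* X = 0) :
    (M2 J c)^2 * X = 0 := by
  funext z
  rw [row_mul]
  cases z with
  | h0 => rw [sq_h0, hT]; rfl
  | h1 => rw [sq_h1, hF]; rfl
  | start b => rw [sq_start, hF]; rfl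
  | last => rw [sq_last, hL]; rfl
  | node b σ i m =>
      rw [sq_node]
      split_ifs with h
      · rw [smul_vecMul', hL, smul_zero]; rfl
      · rw [zero_vecMul']; rfl

lemma M2sq_ne (X : Mat t K D) (h : (M2 J c)^2 * X ≠ 0) :
    e (.start true : St t K D) ᵥ* X ≠ 0 ∨ e (.start false : St t K D) ᵥ* X ≠ 0
      ∨ e (.last : St t K D) ᵥ* X ≠ 0 := by
  by_contra hc
  push_neg at hc
  exact h (M2sq_zero J c X hc.1 hc.2.1 hc.2.2)

lemma eq_rows_of (X Y : Mat t K D) (h : (M2 J c)^2 * X = (M2 J c)^3 * Y) :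
    e (.start true : St t K D) ᵥ* X = e (.start false : St t K D) ᵥ* Y
  ∧ e (.start false : St t K D) ᵥ* X = e (.start false : St t K D) ᵥ* Y := by
  constructor
  · have h0 := congrFun h St.h0
    rwa [row_mul, row_mul, sq_h0, cube_h0] at h0
  · have h1 := congrFun h St.h1
    rwa [row_mul, row_mul, sq_h1, ← row23 J c St.h1 (by simp), sq_h1] at h1

lemma eq_build (X : Mat t K D)
    (hspq : e (.start true : St t K D) ᵥ* X = e (.start false : St t K D) ᵥ* X) :
    (M2 J c)^2 * X = (M2 J c)^3 * X := by
  funext z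
  rw [row_mul, row_mul]
  by_cases hz : z = St.h0
  · subst hz; rw [sq_h0, cube_h0]; exact hspq
  · rw [row23 J c z hz]

lemma assoc_PN (n s : ℕ) (N : Mat t K D) :
    (M2 J c)^2 * M1^n * M2 J c * M1^s * M2 J c * N
      = (M2 J c)^2 * ((M1^n * M2 J c) * ((M1^s * M2 J c) * N)) := by
  simp [mul_assoc]

lemma assoc_PN3 (n s : ℕ) (N : Mat t K D) :
    (M2 J c)^3 * M1^n * M2 J c * M1^s * M2 J c * N
      = (M2 J c)^3 * ((M1^n * M2 J c) * ((M1^s * M2 J c) * N)) := by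
  simp [mul_assoc]

lemma P_phi (n s : ℕ) (L : List ℕ) (r : ℕ) :
    ((M1 : Mat t K D)^n * M2 J c) * (((M1 : Mat t K D)^s * M2 J c) * phi J c L r)
      = phi J c (n::s::L) r := by
  rw [phi_cons, phi_cons]

lemma phi_mem (L : List ℕ) (r : ℕ) :
    phi J c L r ∈ Submonoid.closure {(M1 : Mat t K D), M2 J c} := by
  have hM1 : (M1 : Mat t K D) ∈ Submonoid.closure {(M1 : Mat t K D), M2 J c} :=
    Submonoid.subset_closure (Set.mem_insert _ _)
  have hM2 : (M2 J c : Mat t K D) ∈ Submonoid.closure {(M1 : Mat t K D), M2 J c} :=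
    Submonoid.subset_closure (Set.mem_insert_iff.mpr (Or.inr rfl))
  refine Submonoid.mul_mem _ (Submonoid.list_prod_mem _ (fun x hx => ?_)) (Submonoid.pow_mem _ hM1 r)
  obtain ⟨a, ha, rfl⟩ := List.mem_map.mp hx
  exact Submonoid.mul_mem _ (Submonoid.pow_mem _ hM1 a) hM2

lemma clean_sp (b : Bool) (a : ℕ) (ha : 1 ≤ a) (Z : Mat t K D)
    (hZ : Z ∈ Submonoid.closure {(M1 : Mat t K D), M2 J c}) (h0t : 0 < t) :
    cleanb b (e (.start b : St t K D) ᵥ* ((M1 : Mat t K D)^a * Z)) := by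
  obtain ⟨a', rfl⟩ : ∃ a', a = 1 + a' := ⟨a - 1, by omega⟩
  rw [pow_add, pow_one, mul_assoc, ← Matrix.vecMul_vecMul, e_vecMul, row1_start b h0t]
  have hstart : cleanb b (∑ σ : Fin K, e (.node b σ ⟨0, h0t⟩ ⟨1, by omega⟩ : St t K D)) := by
    refine ⟨by simp [e, Finset.sum_apply, Pi.single_apply],
      by simp [e, Finset.sum_apply, Pi.single_apply],
      by simp [e, Finset.sum_apply, Pi.single_apply],
      by simp [e, Finset.sum_apply, Pi.single_apply], ?_⟩
    intro b' σ i m hb'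
    simp only [e, Finset.sum_apply, Pi.single_apply]
    refine Finset.sum_eq_zero (fun σ' _ => ?_)
    rw [if_neg]
    intro hcon
    rw [St.node.injEq] at hcon
    exact hb' hcon.1
  have hmem : (M1 : Mat t K D)^a' * Z ∈ Submonoid.closure {(M1 : Mat t K D), M2 J c} :=
    Submonoid.mul_mem _ (Submonoid.pow_mem _ (Submonoid.subset_closure (Set.mem_insert _ _)) a') hZ
  exact cleanb_closure J c b _ hmem _ hstart


lemma tval_congr (tt : ℕ) (b : Bool) (x y : ℕ → ℕ) (h : ∀ j, j < tt → x j = y j) :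
    tval J c tt b x = tval J c tt b y := by
  refine Finset.sum_congr rfl (fun σ _ => ?_)
  congr 1
  refine Finset.prod_congr rfl (fun j hj => ?_)
  rw [Finset.mem_range] at hj
  rw [h j hj]

lemma AtoB (hJD : ∀ b' σ' i', J b' σ' i' ≤ D) (htt : 2 ≤ t) (n s : ℕ) (hn : 1 ≤ n) (hs : 1 ≤ s)
    (x : ℕ → ℕ) (hx : ∀ j, j < t → 1 ≤ x j) (hx0 : x 0 = n) (hx1 : x 1 = s)
    (heq : tval J c t true x = tval J c t false x) (hpos : 1 ≤ tval J c t true x) :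
    ∃ N ∈ Submonoid.closure {(M1 : Mat t K D), M2 J c},
      ((M2 J c)^2 * (M1 : Mat t K D)^n * M2 J c * (M1 : Mat t K D)^s * M2 J c * N
        = (M2 J c)^3 * (M1 : Mat t K D)^n * M2 J c * (M1 : Mat t K D)^s * M2 J c * N
      ∧ (M2 J c)^2 * (M1 : Mat t K D)^n * M2 J c * (M1 : Mat t K D)^s * M2 J c * N ≠ 0) := by
  set L0 : List ℕ := (List.range (t-2)).map (fun j => x (j+2)) with hL0
  have hget : ∀ j, (n::s::L0).getD j 0 = if j < t then x j else 0 := by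
    intro j
    match j with
    | 0 => rw [if_pos (by omega)]; simp [hx0]
    | 1 => rw [if_pos (by omega)]; simp [hx1]
    | (j+2) =>
        have hlen : L0.length = t - 2 := by simp [hL0]
        by_cases hj : j < t - 2
        · rw [List.getD_cons_succ, List.getD_cons_succ,
            List.getD_eq_getElem L0 0 (by omega), if_pos (by omega)]
          simp [hL0]
        · rw [List.getD_cons_succ, List.getD_cons_succ,
            List.getD_eq_default L0 0 (by omega), if_neg (by omega)]
  have hgood : good (n::s::L0) 0 t := by
    refine ⟨rfl, fun j hj => ?_, fun j hj => ?_⟩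
    · rw [hget j, if_pos hj]; exact hx j hj
    · rw [hget j, if_neg (by omega)]
  have htv : ∀ b', tval J c t b' (fun j => (n::s::L0).getD j 0) = tval J c t b' x := by
    intro b'
    refine tval_congr J c t b' _ _ (fun j hj => ?_)
    rw [hget j, if_pos hj]
  have hT := (top_run J c hJD htt n hn (s::L0) 0 true).1 hgood
  have hF := (top_run J c hJD htt n hn (s::L0) 0 false).1 hgood
  have hrw : (M2 J c)^2 * (M1 : Mat t K D)^n * M2 J c * (M1 : Mat t K D)^s * M2 J c * phi J c L0 0
      = (M2 J c)^2 * phi J c (n::s::L0) 0 := by rw [assoc_PN, P_phi]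
  have hrw3 : (M2 J c)^3 * (M1 : Mat t K D)^n * M2 J c * (M1 : Mat t K D)^s * M2 J c * phi J c L0 0
      = (M2 J c)^3 * phi J c (n::s::L0) 0 := by rw [assoc_PN3, P_phi]
  refine ⟨phi J c L0 0, phi_mem J c L0 0, ?_, ?_⟩
  · rw [hrw, hrw3]
    apply eq_build
    rw [hT, hF, htv true, htv false, heq]
  · rw [hrw]
    intro hcontra
    have hval : ((M2 J c)^2 * phi J c (n::s::L0) 0 : Mat t K D) St.h0 St.last
        = tval J c t true x := by
      rw [row_mul, sq_h0, hT]
      simp only [e, Pi.smul_apply, Pi.single_apply, if_true, smul_eq_mul, mul_one]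
      simpa using htv true
    rw [hcontra] at hval
    simp only [Matrix.zero_apply] at hval
    omega

lemma CtoA (hJD : ∀ b' σ' i', J b' σ' i' ≤ D) (htt : 2 ≤ t) (n s : ℕ) (hn : 1 ≤ n) (hs : 1 ≤ s)
    (N1 N2 : Mat t K D)
    (hN1 : N1 ∈ Submonoid.closure {(M1 : Mat t K D), M2 J c})
    (hN2 : N2 ∈ Submonoid.closure {(M1 : Mat t K D), M2 J c})
    (heq : (M2 J c)^2 * (M1 : Mat t K D)^n * M2 J c * (M1 : Mat t K D)^s * M2 J c * N1
        = (M2 J c)^3 * (M1 : Mat t K D)^n * M2 J c * (M1 : Mat t K D)^s * M2 J c * N2)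
    (hne : (M2 J c)^2 * (M1 : Mat t K D)^n * M2 J c * (M1 : Mat t K D)^s * M2 J c * N1 ≠ 0) :
    ∃ x : ℕ → ℕ, (∀ j, j < t → 1 ≤ x j) ∧ x 0 = n ∧ x 1 = s
      ∧ tval J c t true x = tval J c t false x := by
  obtain ⟨L1, r1, rfl⟩ := closure_mem_phi J c N1 hN1
  obtain ⟨L2, r2, rfl⟩ := closure_mem_phi J c N2 hN2
  rw [assoc_PN, assoc_PN3, P_phi, P_phi] at heq
  rw [assoc_PN, P_phi] at hne
  obtain ⟨hA, hB⟩ := eq_rows_of J c _ _ heq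
  have hXlast : e (.last : St t K D) ᵥ* phi J c (n::s::L1) r1 = 0 := by
    rw [last_phi, if_neg]
    rintro ⟨hall, -⟩
    have := hall n List.mem_cons_self
    omega
  have hor : e (.start true : St t K D) ᵥ* phi J c (n::s::L1) r1 ≠ 0
      ∨ e (.start false : St t K D) ᵥ* phi J c (n::s::L1) r1 ≠ 0 := by
    rcases M2sq_ne J c _ hne with h | h | h
    · exact Or.inl h
    · exact Or.inr h
    · exact absurd hXlast h
  have hXdecomp : phi J c (n::s::L1) r1
      = (M1 : Mat t K D)^n * (M2 J c * ((M1 : Mat t K D)^s * (M2 J c * phi J c L1 r1))) := by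
    rw [← P_phi]
    simp [mul_assoc]
  have hYdecomp : phi J c (n::s::L2) r2
      = (M1 : Mat t K D)^n * (M2 J c * ((M1 : Mat t K D)^s * (M2 J c * phi J c L2 r2))) := by
    rw [← P_phi]
    simp [mul_assoc]
  have hmemZ : ∀ (L : List ℕ) (r : ℕ),
      M2 J c * ((M1 : Mat t K D)^s * (M2 J c * phi J c L r))
        ∈ Submonoid.closure {(M1 : Mat t K D), M2 J c} := by
    intro L r
    have hM1 : (M1 : Mat t K D) ∈ Submonoid.closure {(M1 : Mat t K D), M2 J c} :=
      Submonoid.subset_closure (Set.mem_insert _ _)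
    have hM2 : (M2 J c : Mat t K D) ∈ Submonoid.closure {(M1 : Mat t K D), M2 J c} :=
      Submonoid.subset_closure (Set.mem_insert_iff.mpr (Or.inr rfl))
    exact Submonoid.mul_mem _ hM2 (Submonoid.mul_mem _ (Submonoid.pow_mem _ hM1 s)
      (Submonoid.mul_mem _ hM2 (phi_mem J c L r)))
  by_cases hg : good (n::s::L1) r1 t
  · have hT := (top_run J c hJD htt n hn (s::L1) r1 true).1 hg
    have hF := (top_run J c hJD htt n hn (s::L1) r1 false).1 hg
    refine ⟨fun j => (n::s::L1).getD j 0, fun j hj => hg.2.1 j hj, by simp, by simp, ?_⟩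
    have hpq : e (.start true : St t K D) ᵥ* phi J c (n::s::L1) r1
        = e (.start false : St t K D) ᵥ* phi J c (n::s::L1) r1 := by rw [hA, ← hB]
    rw [hT, hF] at hpq
    have hlast := congrFun hpq St.last
    simpa [e, Pi.single_apply] using hlast
  · exfalso
    have hTl := (top_run J c hJD htt n hn (s::L1) r1 true).2 hg
    have hFl := (top_run J c hJD htt n hn (s::L1) r1 false).2 hg
    have hcleanP : cleanb true (e (.start true : St t K D) ᵥ* phi J c (n::s::L1) r1) := by
      rw [hXdecomp]; exact clean_sp J c true n hn _ (hmemZ L1 r1) (by omega)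
    have hcleanQY : cleanb false (e (.start false : St t K D) ᵥ* phi J c (n::s::L2) r2) := by
      rw [hYdecomp]; exact clean_sp J c false n hn _ (hmemZ L2 r2) (by omega)
    have hzero1 : e (.start true : St t K D) ᵥ* phi J c (n::s::L1) r1 = 0 := by
      funext z
      cases z with
      | h0 => exact hcleanP.1
      | h1 => exact hcleanP.2.1
      | start bb =>
          cases bb
          · exact hcleanP.2.2.2.1
          · exact hcleanP.2.2.1
      | last => exact hTl
      | node b' σ i m =>
          cases b' with
          | false => exact hcleanP.2.2.2.2 false σ i m (by simp)
          | true =>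
              have h1 := congrFun hA (St.node true σ i m)
              rw [h1]
              exact hcleanQY.2.2.2.2 true σ i m (by simp)
    have hzero2 : e (.start false : St t K D) ᵥ* phi J c (n::s::L1) r1 = 0 := by
      rw [hB, ← hA, hzero1]
    rcases hor with h | h
    · exact h hzero1
    · exact h hzero2


def rho : St t K D → ℕ
  | .h0 => 0
  | .h1 => 1
  | .start true => 2
  | .start false => 3
  | .node b σ i m => 4 + (((cond b 0 1) * K + (σ:ℕ)) * t + (i:ℕ)) * (D+2) + (m:ℕ)
  | .last => 4 + 2 * K * t * (D+2)

lemma rho_node_ge (b : Bool) (σ : Fin K) (i : Fin t) (m : Fin (D+2)) :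
    4 ≤ rho (.node b σ i m : St t K D) := by
  simp only [rho]
  rw [add_assoc]
  exact Nat.le_add_right 4 _

lemma rho_node_lt_last (b : Bool) (σ : Fin K) (i : Fin t) (m : Fin (D+2)) :
    rho (.node b σ i m : St t K D) < rho (.last : St t K D) := by
  simp only [rho]
  set B : ℕ := (cond b 0 1) * K + (σ:ℕ) with hB
  have hBlt : B + 1 ≤ 2 * K := by
    have := σ.isLt
    cases b <;> simp [hB] <;> omega
  have h1 : B * t + (i:ℕ) + 1 ≤ 2*K*t := by
    calc B * t + (i:ℕ) + 1 ≤ B * t + t := by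
          have := i.isLt
          rw [add_assoc]
          exact Nat.add_le_add_left (by omega) _
      _ = (B+1) * t := by ring
      _ ≤ (2*K) * t := Nat.mul_le_mul_right t hBlt
  have key : (B*t + (i:ℕ))*(D+2) + (m:ℕ) < 2*K*t*(D+2) := by
    have e1 : (B*t + (i:ℕ) + 1)*(D+2) = (B*t+(i:ℕ))*(D+2) + (D+2) := by ring
    have h3 : (B*t + (i:ℕ) + 1) * (D+2) ≤ (2*K*t) * (D+2) := Nat.mul_le_mul_right _ h1
    calc (B*t + (i:ℕ))*(D+2) + (m:ℕ) < (B*t + (i:ℕ))*(D+2) + (D+2) :=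
          Nat.add_lt_add_left m.isLt _
      _ = (B*t + (i:ℕ) + 1)*(D+2) := e1.symm
      _ ≤ 2*K*t*(D+2) := h3
  simpa [add_assoc] using Nat.add_lt_add_left key 4

lemma tri1 : ∀ x y : St t K D, (M1 : Mat t K D) x y ≠ 0 → x = y ∨ rho x < rho y := by
  intro x y hne
  cases x <;> cases y <;> simp only [M1, Matrix.of_apply, ne_eq] at hne <;>
    first
    | (exact absurd rfl hne)
    | (exact absurd trivial hne)
    | skip
  case start.node b b' σ' i' m' =>
    right
    have h4 := rho_node_ge b' σ' i' m'
    cases b <;> simp only [rho] <;> omega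
  case node.node b σ i m b' σ' i' m' =>
    rw [ite_eq_right_iff] at hne
    push_neg at hne
    obtain ⟨⟨hb, hσ, hi, hm⟩, -⟩ := hne
    subst hb; subst hσ; subst hi
    rcases hm with ⟨hm1, -⟩ | hm2
    · left
      have : m' = m := Fin.ext hm1
      subst this
      rfl
    · right
      simp only [rho]
      rw [add_assoc, add_assoc]
      exact Nat.add_lt_add_left (Nat.add_lt_add_left (by omega) _) 4

lemma tri2 (hJD : ∀ b' σ' i', J b' σ' i' ≤ D) :
    ∀ x y : St t K D, (M2 J c : Mat t K D) x y ≠ 0 → x = y ∨ rho x < rho y := by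
  intro x y hne
  cases x <;> cases y <;> simp only [M2, Matrix.of_apply, ne_eq] at hne <;>
    first
    | (exact absurd rfl hne)
    | (exact absurd trivial hne)
    | skip
  case h0.h1 => right; simp [rho]
  case h1.start b =>
    right
    cases b <;> simp [rho] at hne ⊢
  case start.start b b' =>
    cases b' with
    | false =>
        cases b with
        | false => left; rfl
        | true => right; simp [rho]
    | true => simp at hne
  case node.node b σ i m b' σ' i' m' =>
    rw [ite_eq_right_iff] at hne
    push_neg at hne
    obtain ⟨⟨hb, hσ, hm, hi, hm'⟩, -⟩ := hne
    subst hb; subst hσ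
    right
    simp only [rho]
    set B : ℕ := (cond b' 0 1) * K + (σ':ℕ) with hB
    have e1 : (B*t + ((i:ℕ) + 1))*(D+2) = (B*t+(i:ℕ))*(D+2) + (D+2) := by ring
    have hJ := hJD b' σ' (i:ℕ)
    have key : (B*t + (i:ℕ))*(D+2) + (m:ℕ) < (B*t + (i':ℕ))*(D+2) + (m':ℕ) := by
      have hii : (i':ℕ) = (i:ℕ) + 1 := hi
      rw [hii, hm', e1, hm, add_zero]
      exact Nat.add_lt_add_left (by omega) _
    simpa [add_assoc] using Nat.add_lt_add_left key 4
  case node.last b σ i m =>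
    right
    exact rho_node_lt_last b σ i m
  case last.last => left; rfl


end Construction

lemma sum_pad {K Kp : ℕ} (h : Kp ≤ K) (g : Fin Kp → ℕ) :
    (∑ σ : Fin K, if hσ : (σ:ℕ) < Kp then g ⟨σ, hσ⟩ else 0) = ∑ σ : Fin Kp, g σ := by
  have h1 := Fin.sum_univ_eq_sum_range (fun j => if hσ : j < Kp then g ⟨j, hσ⟩ else 0) K
  have h2 := Fin.sum_univ_eq_sum_range (fun j => if hσ : j < Kp then g ⟨j, hσ⟩ else 0) Kp
  rw [h1, ← Finset.sum_subset (Finset.range_subset_range.mpr h)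
      (fun x _ hnx => dif_neg (by simpa using hnx)), ← h2]
  refine Finset.sum_congr rfl (fun σ _ => ?_)
  rw [dif_pos σ.isLt]

end S6

/-- A square matrix over ℕ is upper triangular if every entry below the diagonal is zero. -/
def MatrixUpperTriangular {k : ℕ} (M : Matrix (Fin k) (Fin k) ℕ) : Prop :=
  ∀ i j : Fin k, j < i → M i j = 0

/-- equivalence of the Diophantine condition with the solvability of the
linear equations `M2² Mprod(n,s) X = M2³ Mprod(n,s) X ≠ O` and
`M2² Mprod(n,s) X = M2³ Mprod(n,s) Y ≠ O` over the monoid generated by two upper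
triangular matrices with nonnegative integer entries, where
`Mprod(n,s) = M1^n M2 M1^s M2`. -/
theorem statement6 (t : ℕ) (ht : 2 ≤ t) (p q : MvPolynomial (Fin t) ℕ)
    (hp : ∀ m : Fin t → ℕ, (∀ i, 0 < m i) → 0 < MvPolynomial.eval m p)
    (hq : ∀ m : Fin t → ℕ, (∀ i, 0 < m i) → 0 < MvPolynomial.eval m q) :
    ∃ (k : ℕ) (M1 M2 : Matrix (Fin k) (Fin k) ℕ),
      0 < k ∧ MatrixUpperTriangular M1 ∧ MatrixUpperTriangular M2 ∧
      ∀ n s : ℕ, 0 < n → 0 < s →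
        (((∃ m : Fin t → ℕ, (∀ i, 0 < m i) ∧ m ⟨0, by omega⟩ = n ∧ m ⟨1, by omega⟩ = s ∧
              MvPolynomial.eval m p = MvPolynomial.eval m q) ↔
            (∃ N ∈ Submonoid.closure ({M1, M2} : Set (Matrix (Fin k) (Fin k) ℕ)),
              M2 ^ 2 * M1 ^ n * M2 * M1 ^ s * M2 * N =
                M2 ^ 3 * M1 ^ n * M2 * M1 ^ s * M2 * N ∧
              M2 ^ 2 * M1 ^ n * M2 * M1 ^ s * M2 * N ≠ 0)) ∧
          ((∃ N ∈ Submonoid.closure ({M1, M2} : Set (Matrix (Fin k) (Fin k) ℕ)),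
              M2 ^ 2 * M1 ^ n * M2 * M1 ^ s * M2 * N =
                M2 ^ 3 * M1 ^ n * M2 * M1 ^ s * M2 * N ∧
              M2 ^ 2 * M1 ^ n * M2 * M1 ^ s * M2 * N ≠ 0) ↔
            (∃ N1 ∈ Submonoid.closure ({M1, M2} : Set (Matrix (Fin k) (Fin k) ℕ)),
              ∃ N2 ∈ Submonoid.closure ({M1, M2} : Set (Matrix (Fin k) (Fin k) ℕ)),
              M2 ^ 2 * M1 ^ n * M2 * M1 ^ s * M2 * N1 =
                M2 ^ 3 * M1 ^ n * M2 * M1 ^ s * M2 * N2 ∧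
              M2 ^ 2 * M1 ^ n * M2 * M1 ^ s * M2 * N1 ≠ 0))) := by
  classical
  obtain ⟨Kp, Jp, cp, hrp⟩ := rep_lemma t p
  obtain ⟨Kq, Jq, cq, hrq⟩ := rep_lemma t q
  set K := max Kp Kq with hK
  set J : Bool → Fin K → ℕ → ℕ := fun b σ j =>
    if hj : j < t then
      (if b then (if hσ : (σ:ℕ) < Kp then Jp ⟨σ,hσ⟩ ⟨j,hj⟩ else 0)
       else (if hσ : (σ:ℕ) < Kq then Jq ⟨σ,hσ⟩ ⟨j,hj⟩ else 0))
    else 0 with hJdef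
  set c : Bool → Fin K → ℕ := fun b σ =>
    if b then (if hσ : (σ:ℕ) < Kp then cp ⟨σ,hσ⟩ else 0)
    else (if hσ : (σ:ℕ) < Kq then cq ⟨σ,hσ⟩ else 0) with hcdef
  set D : ℕ := Finset.sup Finset.univ (fun σ : Fin K =>
    Finset.sup Finset.univ (fun i : Fin t => max (J true σ (i:ℕ)) (J false σ (i:ℕ)))) with hD
  have hJD : ∀ b σ j, J b σ j ≤ D := by
    intro b σ j
    by_cases hj : j < t
    · have h1 : J b σ j ≤ max (J true σ j) (J false σ j) := by
        cases b
        · exact le_max_right _ _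
        · exact le_max_left _ _
      have h2 : max (J true σ j) (J false σ j)
          ≤ Finset.sup Finset.univ (fun i : Fin t => max (J true σ (i:ℕ)) (J false σ (i:ℕ))) := by
        have := Finset.le_sup (f := fun i : Fin t => max (J true σ (i:ℕ)) (J false σ (i:ℕ)))
          (Finset.mem_univ (⟨j, hj⟩ : Fin t))
        simpa using this
      have h3 : Finset.sup Finset.univ (fun i : Fin t => max (J true σ (i:ℕ)) (J false σ (i:ℕ)))
          ≤ D := by
        rw [hD]
        exact Finset.le_sup (f := fun σ' : Fin K => Finset.sup Finset.univ
          (fun i : Fin t => max (J true σ' (i:ℕ)) (J false σ' (i:ℕ)))) (Finset.mem_univ σ)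
      omega
    · simp [hJdef, hj]
  -- bridges between tval and polynomial evaluation
  have hbridgeP : ∀ x : ℕ → ℕ, (∀ j, j < t → 1 ≤ x j) →
      S6.tval J c t true x = MvPolynomial.eval (fun i : Fin t => x (i:ℕ)) p := by
    intro x hx
    rw [hrp (fun i : Fin t => x (i:ℕ)) (fun i => hx i i.isLt), S6.tval]
    have hterm : ∀ σ : Fin K,
        c true σ * ∏ j ∈ Finset.range t, Nat.choose (x j - 1) (J true σ j)
          = (if hσ : (σ:ℕ) < Kp
              then cp ⟨σ,hσ⟩ * ∏ i : Fin t, Nat.choose (x (i:ℕ) - 1) (Jp ⟨σ,hσ⟩ i)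
              else 0) := by
      intro σ
      by_cases hσ : (σ:ℕ) < Kp
      · rw [dif_pos hσ]
        have hc : c true σ = cp ⟨σ,hσ⟩ := by simp [hcdef, hσ]
        have hprod : (∏ j ∈ Finset.range t, Nat.choose (x j - 1) (J true σ j))
            = ∏ i : Fin t, Nat.choose (x (i:ℕ) - 1) (Jp ⟨σ,hσ⟩ i) := by
          rw [← Fin.prod_univ_eq_prod_range (fun j => Nat.choose (x j - 1) (J true σ j)) t]
          refine Finset.prod_congr rfl (fun i _ => ?_)
          congr 1
          simp [hJdef, i.isLt, hσ]
        rw [hc, hprod]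
      · rw [dif_neg hσ]
        have hc : c true σ = 0 := by simp [hcdef, hσ]
        rw [hc, zero_mul]
    rw [Finset.sum_congr rfl (fun σ _ => hterm σ)]
    exact S6.sum_pad (le_max_left Kp Kq)
      (fun σp => cp σp * ∏ i : Fin t, (x (i:ℕ) - 1).choose (Jp σp i))
  have hbridgeQ : ∀ x : ℕ → ℕ, (∀ j, j < t → 1 ≤ x j) →
      S6.tval J c t false x = MvPolynomial.eval (fun i : Fin t => x (i:ℕ)) q := by
    intro x hx
    rw [hrq (fun i : Fin t => x (i:ℕ)) (fun i => hx i i.isLt), S6.tval]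
    have hterm : ∀ σ : Fin K,
        c false σ * ∏ j ∈ Finset.range t, Nat.choose (x j - 1) (J false σ j)
          = (if hσ : (σ:ℕ) < Kq
              then cq ⟨σ,hσ⟩ * ∏ i : Fin t, Nat.choose (x (i:ℕ) - 1) (Jq ⟨σ,hσ⟩ i)
              else 0) := by
      intro σ
      by_cases hσ : (σ:ℕ) < Kq
      · rw [dif_pos hσ]
        have hc : c false σ = cq ⟨σ,hσ⟩ := by simp [hcdef, hσ]
        have hprod : (∏ j ∈ Finset.range t, Nat.choose (x j - 1) (J false σ j))
            = ∏ i : Fin t, Nat.choose (x (i:ℕ) - 1) (Jq ⟨σ,hσ⟩ i) := by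
          rw [← Fin.prod_univ_eq_prod_range (fun j => Nat.choose (x j - 1) (J false σ j)) t]
          refine Finset.prod_congr rfl (fun i _ => ?_)
          congr 1
          simp [hJdef, i.isLt, hσ]
        rw [hc, hprod]
      · rw [dif_neg hσ]
        have hc : c false σ = 0 := by simp [hcdef, hσ]
        rw [hc, zero_mul]
    rw [Finset.sum_congr rfl (fun σ _ => hterm σ)]
    exact S6.sum_pad (le_max_right Kp Kq)
      (fun σp => cq σp * ∏ i : Fin t, (x (i:ℕ) - 1).choose (Jq σp i))
  -- order structure on the state space
  letI po : PartialOrder (S6.St t K D) :=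
    { le := fun x y => x = y ∨ S6.rho x < S6.rho y
      le_refl := fun x => Or.inl rfl
      le_trans := by
        rintro x y z (rfl | h1) h2
        · exact h2
        · rcases h2 with rfl | h2
          · exact Or.inr h1
          · exact Or.inr (lt_trans h1 h2)
      le_antisymm := by
        rintro x y (rfl | h1) h2
        · rfl
        · rcases h2 with rfl | h2
          · rfl
          · exact absurd h2 (Nat.lt_asymm h1) }
  set k := Fintype.card (S6.St t K D) with hk
  letI : Fintype (LinearExtension (S6.St t K D)) := inferInstanceAs (Fintype (S6.St t K D))
  have hcard : Fintype.card (LinearExtension (S6.St t K D)) = k := rfl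
  let E : Fin k ≃o LinearExtension (S6.St t K D) := monoEquivOfFin _ hcard
  let eqv : S6.St t K D ≃ Fin k := (E.toEquiv.symm : LinearExtension (S6.St t K D) ≃ Fin k)
  let Ψ := Matrix.reindexAlgEquiv ℕ ℕ eqv
  have happ : ∀ (M : S6.Mat t K D) (i j : Fin k), (Ψ M) i j = M (eqv.symm i) (eqv.symm j) := by
    intro M i j
    simp [Ψ, Matrix.reindexAlgEquiv_apply, Matrix.reindex_apply, Matrix.submatrix_apply]
  have htri : ∀ (M : S6.Mat t K D),
      (∀ x y : S6.St t K D, M x y ≠ 0 → x = y ∨ S6.rho x < S6.rho y) →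
      MatrixUpperTriangular (Ψ M) := by
    intro M hM i j hji
    rw [happ]
    by_contra hne
    rcases hM _ _ hne with heq | hlt
    · have hij : i = j := by
        have := congrArg eqv heq
        simpa using this
      exact (ne_of_gt hji) hij
    · have hle : (eqv.symm i : S6.St t K D) ≤ eqv.symm j := Or.inr hlt
      have hle2 : toLinearExtension (eqv.symm i) ≤ toLinearExtension (eqv.symm j) :=
        toLinearExtension.monotone hle
      have hlt2 : (E j : LinearExtension (S6.St t K D)) < E i := E.strictMono hji
      have hEi : (E i : LinearExtension (S6.St t K D)) = toLinearExtension (eqv.symm i) := rfl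
      have hEj : (E j : LinearExtension (S6.St t K D)) = toLinearExtension (eqv.symm j) := rfl
      rw [hEi, hEj] at hlt2
      exact absurd (lt_of_lt_of_le hlt2 hle2) (lt_irrefl _)
  refine ⟨k, Ψ S6.M1, Ψ (S6.M2 J c), ?_, htri _ (S6.tri1), htri _ (S6.tri2 J c hJD), ?_⟩
  · have : Nonempty (S6.St t K D) := ⟨S6.St.h0⟩
    rw [hk]
    exact Fintype.card_pos
  intro n s hn hs
  set SM1 : S6.Mat t K D := S6.M1 with hSM1
  set SM2 : S6.Mat t K D := S6.M2 J c with hSM2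
  have hΨinj : Function.Injective Ψ := (Ψ : _ ≃ₐ[ℕ] _).injective
  let Φ : S6.Mat t K D →* Matrix (Fin k) (Fin k) ℕ :=
    (Ψ : _ ≃ₐ[ℕ] _).toAlgHom.toRingHom.toMonoidHom
  have himg : ({Ψ SM1, Ψ SM2} : Set (Matrix (Fin k) (Fin k) ℕ)) = Φ '' {SM1, SM2} := by
    rw [Set.image_insert_eq, Set.image_singleton]
    rfl
  have hmem : ∀ N' : Matrix (Fin k) (Fin k) ℕ,
      N' ∈ Submonoid.closure ({Ψ SM1, Ψ SM2} : Set (Matrix (Fin k) (Fin k) ℕ)) ↔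
        ∃ N ∈ Submonoid.closure ({SM1, SM2} : Set (S6.Mat t K D)), Ψ N = N' := by
    intro N'
    rw [himg, ← MonoidHom.map_mclosure]
    exact Submonoid.mem_map
  have hprod2 : ∀ N : S6.Mat t K D, Ψ (SM2^2 * SM1^n * SM2 * SM1^s * SM2 * N)
      = (Ψ SM2)^2 * (Ψ SM1)^n * (Ψ SM2) * (Ψ SM1)^s * (Ψ SM2) * Ψ N := by
    intro N; simp [map_mul, map_pow]
  have hprod3 : ∀ N : S6.Mat t K D, Ψ (SM2^3 * SM1^n * SM2 * SM1^s * SM2 * N)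
      = (Ψ SM2)^3 * (Ψ SM1)^n * (Ψ SM2) * (Ψ SM1)^s * (Ψ SM2) * Ψ N := by
    intro N; simp [map_mul, map_pow]
  have hAB : (∃ m : Fin t → ℕ, (∀ i, 0 < m i) ∧ m ⟨0, by omega⟩ = n ∧ m ⟨1, by omega⟩ = s ∧
        MvPolynomial.eval m p = MvPolynomial.eval m q) ↔
      (∃ N' ∈ Submonoid.closure ({Ψ SM1, Ψ SM2} : Set (Matrix (Fin k) (Fin k) ℕ)),
        (Ψ SM2) ^ 2 * (Ψ SM1) ^ n * (Ψ SM2) * (Ψ SM1) ^ s * (Ψ SM2) * N' =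
          (Ψ SM2) ^ 3 * (Ψ SM1) ^ n * (Ψ SM2) * (Ψ SM1) ^ s * (Ψ SM2) * N' ∧
        (Ψ SM2) ^ 2 * (Ψ SM1) ^ n * (Ψ SM2) * (Ψ SM1) ^ s * (Ψ SM2) * N' ≠ 0) := by
    constructor
    · rintro ⟨m, hmpos, hm0, hm1, hmeq⟩
      set x : ℕ → ℕ := fun j => if hj : j < t then m ⟨j, hj⟩ else 1 with hxdef
      have hx : ∀ j, j < t → 1 ≤ x j := by
        intro j hj
        simp only [hxdef, dif_pos hj]
        exact hmpos ⟨j, hj⟩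
      have hxm : (fun i : Fin t => x (i:ℕ)) = m := by
        funext i
        simp [hxdef, i.isLt]
      have hx0 : x 0 = n := by
        simp only [hxdef, dif_pos (show (0:ℕ) < t by omega)]
        exact hm0
      have hx1 : x 1 = s := by
        simp only [hxdef, dif_pos (show (1:ℕ) < t by omega)]
        exact hm1
      have heqt : S6.tval J c t true x = S6.tval J c t false x := by
        rw [hbridgeP x hx, hbridgeQ x hx, hxm]
        exact hmeq
      have hpos1 : 1 ≤ S6.tval J c t true x := by
        rw [hbridgeP x hx, hxm]
        exact hp m hmpos
      obtain ⟨N, hNmem, hNeq, hNne⟩ := S6.AtoB J c hJD ht n s hn hs x hx hx0 hx1 heqt hpos1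
      refine ⟨Ψ N, (hmem _).mpr ⟨N, hNmem, rfl⟩, ?_, ?_⟩
      · rw [← hprod2, ← hprod3, hNeq]
      · rw [← hprod2]
        intro h0
        exact hNne (hΨinj (by rw [h0, map_zero]))
    · rintro ⟨N', hN'mem, hN'eq, hN'ne⟩
      obtain ⟨N, hNmem, rfl⟩ := (hmem N').mp hN'mem
      have hSeq : SM2^2*SM1^n*SM2*SM1^s*SM2*N = SM2^3*SM1^n*SM2*SM1^s*SM2*N :=
        hΨinj (by rw [hprod2, hprod3]; exact hN'eq)
      have hSne : SM2^2*SM1^n*SM2*SM1^s*SM2*N ≠ 0 := by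
        intro h0
        apply hN'ne
        rw [← hprod2, h0, map_zero]
      obtain ⟨x, hx, hx0, hx1, hxeq⟩ := S6.CtoA J c hJD ht n s hn hs N N hNmem hNmem hSeq hSne
      refine ⟨fun i : Fin t => x (i:ℕ), fun i => hx i i.isLt, hx0, hx1, ?_⟩
      rw [← hbridgeP x hx, ← hbridgeQ x hx, hxeq]
  refine ⟨hAB, ?_, ?_⟩
  · rintro ⟨N', h1, h2, h3⟩
    exact ⟨N', h1, N', h1, h2, h3⟩
  · rintro ⟨N1', hN1'm, N2', hN2'm, hEq, hNe⟩
    obtain ⟨N1, hN1, rfl⟩ := (hmem N1').mp hN1'm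
    obtain ⟨N2, hN2, rfl⟩ := (hmem N2').mp hN2'm
    have hSeq : SM2^2*SM1^n*SM2*SM1^s*SM2*N1 = SM2^3*SM1^n*SM2*SM1^s*SM2*N2 :=
      hΨinj (by rw [hprod2, hprod3]; exact hEq)
    have hSne : SM2^2*SM1^n*SM2*SM1^s*SM2*N1 ≠ 0 := by
      intro h0
      apply hNe
      rw [← hprod2, h0, map_zero]
    obtain ⟨x, hx, hx0, hx1, hxeq⟩ := S6.CtoA J c hJD ht n s hn hs N1 N2 hN1 hN2 hSeq hSne
    exact hAB.mp ⟨fun i : Fin t => x (i:ℕ), fun i => hx i i.isLt, hx0, hx1,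
      by rw [← hbridgeP x hx, ← hbridgeQ x hx, hxeq]⟩
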